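/- For every permutation-invariant definition as above, the permanent of a square matrix A over a commutative ring satisfies Ryser's formula: perm(A) = (-1)^n · ∑_{S ⊆ {1,…,n}} (-1)^{|S|} · ∏_{i=1}^n ∑_{j ∈ S} a_{i,j}. -/

import Mathlib

def perm {n : ℕ} {R : Type*} [CommRing R] (A : Matrix (Fin n) (Fin n) R) : R :=
  ∑ σ : Equiv.Perm (Fin n), ∏ i, A i (σ i)

open Finset in
lemma powerset_sum_R {α R : Type*} [DecidableEq α] [CommRing R] (x : Finset α) :
    (∑ m ∈ x.powerset, (-1 : R) ^ m.card) = if x = ∅ then 1 else 0 := by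
  have h := congrArg (fun z : ℤ => (z : R)) (Finset.sum_powerset_neg_one_pow_card (x := x))
  push_cast at h
  split_ifs with hx <;> simp_all

lemma key {n : ℕ} {R : Type*} [CommRing R] (f : Fin n → Fin n) :
    (∑ S ∈ Finset.univ.filter (fun S : Finset (Fin n) => ∀ i, f i ∈ S), (-1 : R) ^ S.card)
      = if Function.Surjective f then (-1 : R) ^ n else 0 := by
  set T : Finset (Fin n) := Finset.image f Finset.univ with hT
  have hfilter : Finset.univ.filter (fun S : Finset (Fin n) => ∀ i, f i ∈ S)
      = Finset.univ.filter (fun S => T ⊆ S) := by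
    ext S; simp [hT, Finset.subset_iff]
  rw [hfilter]
  have hbij : ∑ S ∈ Finset.univ.filter (fun S => T ⊆ S), (-1 : R) ^ S.card
      = ∑ m ∈ Tᶜ.powerset, (-1 : R) ^ (m.card + T.card) := by
    refine Finset.sum_nbij' (fun S => S \ T) (fun m => m ∪ T) ?_ ?_ ?_ ?_ ?_
    · intro S hS
      simp only [Finset.mem_filter] at hS
      simp [Finset.mem_powerset, Finset.subset_iff]
    · intro m hm
      simp only [Finset.mem_powerset] at hm
      simp [Finset.subset_union_right]
    · intro S hS
      simp only [Finset.mem_filter] at hS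
      rw [Finset.sdiff_union_of_subset hS.2]
    · intro m hm
      simp only [Finset.mem_powerset] at hm
      rw [Finset.union_sdiff_right]
      exact Finset.sdiff_eq_self_of_disjoint (Finset.disjoint_left.mpr fun a ha =>
        by have := hm ha; simp at this; exact this)
    · intro S hS
      simp only [Finset.mem_filter] at hS
      congr 1
      have := Finset.card_le_card hS.2
      rw [Finset.card_sdiff_of_subset hS.2]
      omega
  rw [hbij]
  simp_rw [pow_add, ← Finset.sum_mul, powerset_sum_R]
  have hsurj : Function.Surjective f ↔ Tᶜ = ∅ := by
    rw [Finset.compl_eq_empty_iff, hT, Finset.eq_univ_iff_forall]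
    constructor
    · intro h j; obtain ⟨i, hi⟩ := h j; exact Finset.mem_image.mpr ⟨i, Finset.mem_univ i, hi⟩
    · intro h j; obtain ⟨i, _, hi⟩ := Finset.mem_image.mp (h j); exact ⟨i, hi⟩
  split_ifs with h1 h2 h3
  · have : T = Finset.univ := by rwa [← Finset.compl_eq_empty_iff]
    rw [this, Finset.card_univ, Fintype.card_fin, one_mul]
  · exact absurd (hsurj.mpr h1) h2
  · exact absurd (hsurj.mp h3) h1
  · exact zero_mul _

theorem ryser_formula {n : ℕ} {R : Type*} [CommRing R] (A : Matrix (Fin n) (Fin n) R) :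
    perm A = (-1 : R) ^ n *
      ∑ S : Finset (Fin n), (-1 : R) ^ S.card * ∏ i, ∑ j ∈ S, A i j := by
  have step1 : ∑ S : Finset (Fin n), (-1 : R) ^ S.card * ∏ i, ∑ j ∈ S, A i j
      = ∑ S : Finset (Fin n), ∑ f ∈ Fintype.piFinset (fun _ : Fin n => S),
          (-1 : R) ^ S.card * ∏ i, A i (f i) := by
    refine Finset.sum_congr rfl fun S _ => ?_
    exact (congrArg _ (Finset.prod_univ_sum (t := fun _ => S) (f := fun i j => A i j))).trans
      (Finset.mul_sum _ _ _)
  rw [step1]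
  rw [Finset.sum_comm' (t' := Finset.univ)
    (s' := fun f => Finset.univ.filter (fun S : Finset (Fin n) => ∀ i, f i ∈ S))
    (h := by intro S f; simp [Fintype.mem_piFinset])]
  have step2 : ∀ f : Fin n → Fin n,
      ∑ S ∈ Finset.univ.filter (fun S : Finset (Fin n) => ∀ i, f i ∈ S),
        (-1 : R) ^ S.card * ∏ i, A i (f i)
      = (if Function.Surjective f then (-1 : R) ^ n else 0) * ∏ i, A i (f i) := by
    intro f
    rw [← Finset.sum_mul, key]
  simp_rw [step2, ite_mul, zero_mul, Finset.sum_ite, Finset.sum_const_zero, add_zero,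
    ← Finset.mul_sum]
  have step3 : ∑ f ∈ Finset.univ.filter (fun f : Fin n → Fin n => Function.Surjective f),
      ∏ i, A i (f i) = perm A := by
    rw [perm]
    refine (Finset.sum_bij (fun (σ : Equiv.Perm (Fin n)) _ => (σ : Fin n → Fin n)) ?_ ?_ ?_ ?_).symm
    · intro σ _; simp [σ.surjective]
    · intro σ _ τ _ h
      exact Equiv.coe_fn_injective h
    · intro f hf
      simp only [Finset.mem_filter] at hf
      exact ⟨Equiv.ofBijective f (Finite.surjective_iff_bijective.mp hf.2), Finset.mem_univ _, rfl⟩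
    · intro σ _; rfl
  rw [step3, ← mul_assoc, ← pow_add, Even.neg_one_pow ⟨n, by ring⟩, one_mul]
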